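/- arXiv:2003.08249 — 6 statements merged into one kernel-verified Lean document; each statement's English description precedes it below -/
import Mathlib

section
/- Let x, u, y, v, z be words over an ordered alphabet Σ with |u| = |v|. Then, with respect to radix (length-lexicographic) order, either xuuyz < xuyvz, or xyvvz < xuyvz, or xuuyz = xuyvz = xyvvz. -/
/-- Radix (length-lexicographic) order on words over a linearly ordered alphabet. -/
def RadixLT {α : Type*} [LinearOrder α] (u v : List α) : Prop :=
  u.length < v.length ∨ (u.length = v.length ∧ List.Lex (· < ·) u v)

/-- `SWords L` is the set of length-wise lexicographically smallest words of `L`. -/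
def SWords {α : Type*} [LinearOrder α] (L : Set (List α)) : Set (List α) :=
  {u | u ∈ L ∧ ∀ v ∈ L, RadixLT v u → v.length < u.length}

/-- A language is thin if it contains at most one word of each length. -/
def Thin {α : Type*} (L : Set (List α)) : Prop :=
  ∀ n : ℕ, ∀ u ∈ L, ∀ v ∈ L, u.length = n → v.length = n → u = v

private lemma lex_append_left {α : Type*} {r : α → α → Prop} (p : List α) {s t : List α}
    (hst : List.Lex r s t) : List.Lex r (p ++ s) (p ++ t) := by
  induction p with
  | nil => simpa using hst
  | cons a p ih => exact List.Lex.cons ih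

private lemma lex_append_right {α : Type*} {r : α → α → Prop} :
    ∀ (s t w w' : List α), s.length = t.length → List.Lex r s t →
      List.Lex r (s ++ w) (t ++ w')
  | [], [], _, _, _, hst => by cases hst
  | [], _ :: _, _, _, hl, _ => by simp at hl
  | _ :: _, [], _, _, hl, _ => by simp at hl
  | a :: s, b :: t, w, w', hl, hst => by
    cases hst with
    | rel hab => exact List.Lex.rel hab
    | cons hst =>
        exact List.Lex.cons (lex_append_right s t w w' (by simpa using hl) hst)

private lemma lex_trichotomy {α : Type*} [LinearOrder α] :
    ∀ (s t : List α), s.length = t.length →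
      List.Lex (· < ·) s t ∨ s = t ∨ List.Lex (· < ·) t s
  | [], [], _ => Or.inr (Or.inl rfl)
  | [], _ :: _, hl => by simp at hl
  | _ :: _, [], hl => by simp at hl
  | a :: s, b :: t, hl => by
    rcases lt_trichotomy a b with hab | hab | hab
    · exact Or.inl (List.Lex.rel hab)
    · subst hab
      rcases lex_trichotomy s t (by simpa using hl) with h | h | h
      · exact Or.inl (List.Lex.cons h)
      · exact Or.inr (Or.inl (by rw [h]))
      · exact Or.inr (Or.inr (List.Lex.cons h))
    · exact Or.inr (Or.inr (List.Lex.rel hab))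

theorem stmt0 {α : Type*} [LinearOrder α] (x u y v z : List α)
    (h : u.length = v.length) :
    RadixLT (x ++ u ++ u ++ y ++ z) (x ++ u ++ y ++ v ++ z) ∨
    RadixLT (x ++ y ++ v ++ v ++ z) (x ++ u ++ y ++ v ++ z) ∨
    (x ++ u ++ u ++ y ++ z = x ++ u ++ y ++ v ++ z ∧
      x ++ u ++ y ++ v ++ z = x ++ y ++ v ++ v ++ z) := by
  rcases lex_trichotomy (u ++ y) (y ++ v) (by simp [h]; omega) with h1 | h1 | h1
  · left
    right
    constructor
    · simp; omega
    · have := lex_append_left (r := (· < ·)) (x ++ u)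
        (lex_append_right (u ++ y) (y ++ v) z z (by simp; omega) h1)
      simpa [List.append_assoc] using this
  · right; right
    constructor
    · simp only [List.append_assoc]
      rw [show u ++ (y ++ z) = y ++ (v ++ z) from by
        rw [← List.append_assoc, h1, List.append_assoc]]
    · simp only [List.append_assoc]
      rw [show u ++ (y ++ (v ++ z)) = y ++ (v ++ (v ++ z)) from by
        rw [← List.append_assoc, h1, List.append_assoc]]
  · right; left
    right
    constructor
    · simp; omega
    · have := lex_append_left (r := (· < ·)) x
        (lex_append_right (y ++ v) (u ++ y) (v ++ z) (v ++ z) (by simp; omega) h1)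
      simpa [List.append_assoc] using this
end

section
/- Let A be a DFA with n states recognizing L, let w ∈ S(L), and suppose w admits a factorization w = u₁v₁^{i₁}⋯u_kv_k^{i_k} satisfying the loop property (q₀ · u₁v₁^{i₁}⋯u_j = q₀ · u₁v₁^{i₁}⋯u_jv_j for all j) and such that no v_j is a prefix of the remaining suffix u_{j+1}v_{j+1}^{i_{j+1}}⋯u_kv_k^{i_k}. If a < b are two indices with v_a, v_b nonempty and |v_a| = |v_b|, then a contradiction arises; hence the nonempty lengths |v_j| in such a factorization are pairwise distinct. -/
/-- `wpow l n` is the `n`-fold concatenation of the word `l`. -/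
def wpow {α : Type*} (l : List α) : ℕ → List α
  | 0 => []
  | n + 1 => l ++ wpow l n

namespace Stmt9Aux

theorem wpow_add {α : Type*} (l : List α) (m n : ℕ) :
    wpow l (m + n) = wpow l m ++ wpow l n := by
  induction m with
  | zero => simp [wpow]
  | succ m ih =>
    rw [Nat.add_right_comm]
    show l ++ wpow l (m + n) = (l ++ wpow l m) ++ wpow l n
    rw [ih, List.append_assoc]

theorem wpow_succ' {α : Type*} (l : List α) (n : ℕ) :
    wpow l (n + 1) = wpow l n ++ l := by
  rw [wpow_add]; simp [wpow]

theorem evalFrom_wpow {α σ : Type*} (M : DFA α σ) (s : σ) (v : List α)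
    (h : M.evalFrom s v = s) (m : ℕ) : M.evalFrom s (wpow v m) = s := by
  induction m with
  | zero => simp [wpow]
  | succ m ih =>
    show M.evalFrom s (v ++ wpow v m) = s
    rw [DFA.evalFrom_of_append, h, ih]

theorem evalFrom_pump1 {α σ : Type*} (M : DFA α σ) {P : List α} (va Q : List α)
    (ha : M.evalFrom (M.evalFrom M.start P) va = M.evalFrom M.start P) (m : ℕ) :
    M.evalFrom M.start (P ++ (wpow va m ++ Q)) = M.evalFrom (M.evalFrom M.start P) Q := by
  rw [DFA.evalFrom_of_append, DFA.evalFrom_of_append, evalFrom_wpow M _ va ha m]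

theorem lex_append_left {α : Type*} {r : α → α → Prop} (c : List α) {p q : List α}
    (h : List.Lex r p q) : List.Lex r (c ++ p) (c ++ q) := by
  induction c with
  | nil => exact h
  | cons a c ih => exact List.Lex.cons ih

theorem lex_append_of_length_eq {α : Type*} {r : α → α → Prop} :
    ∀ {s t : List α}, List.Lex r s t → s.length = t.length →
      ∀ z1 z2 : List α, List.Lex r (s ++ z1) (t ++ z2) := by
  intro s t h
  induction h with
  | nil => intro hl; simp at hl
  | @rel a l1 b l2 hab => intro _ z1 z2; exact List.Lex.rel hab
  | @cons a l1 l2 h ih =>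
    intro hl z1 z2
    exact List.Lex.cons (ih (by simpa using hl) z1 z2)

theorem range_split {a k : ℕ} (h : a < k) :
    List.range k = List.range a ++ a :: List.range' (a + 1) (k - (a + 1)) := by
  rw [List.range_eq_range', List.range_eq_range',
    show k = (k - a) + a by omega, Nat.add_comm (k - a) a, ← List.range'_append_1 (s := 0) (m := a) (n := k - a)]
  congr 1
  rw [show k - a = (k - (a+1)) + 1 by omega, List.range'_succ]
  simp
  omega

theorem range'_split {s n b : ℕ} (h1 : s ≤ b) (h2 : b < s + n) :
    List.range' s n = List.range' s (b - s) ++ b :: List.range' (b + 1) (s + n - (b + 1)) := by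
  rw [show n = (n - (b - s)) + (b - s) by omega,
    Nat.add_comm (n - (b - s)) (b - s), ← List.range'_append_1 (s := s) (m := b - s) (n := n - (b - s))]
  congr 1
  rw [show s + (b - s) = b by omega, show n - (b-s) = (s + n - (b+1)) + 1 by omega,
    List.range'_succ]
  congr 2
  omega

theorem core {α : Type*} [LinearOrder α] {L : Set (List α)} {X U Y V Z : List α}
    (hw : X ++ (U ++ (Y ++ (V ++ Z))) ∈ SWords L)
    (h1 : X ++ (U ++ (U ++ (Y ++ Z))) ∈ L)
    (h2 : X ++ (Y ++ (V ++ (V ++ Z))) ∈ L)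
    (hUV : U.length = V.length) :
    U ++ Y = Y ++ V := by
  have hlen1 : (X ++ (U ++ (U ++ (Y ++ Z)))).length
      = (X ++ (U ++ (Y ++ (V ++ Z)))).length := by
    simp only [List.length_append]; omega
  have hlen2 : (X ++ (Y ++ (V ++ (V ++ Z)))).length
      = (X ++ (U ++ (Y ++ (V ++ Z)))).length := by
    simp only [List.length_append]; omega
  have hmin : ∀ x ∈ L, x.length = (X ++ (U ++ (Y ++ (V ++ Z)))).length →
      ¬ List.Lex (· < ·) x (X ++ (U ++ (Y ++ (V ++ Z)))) := by
    intro x hx hxl hlex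
    have := hw.2 x hx (Or.inr ⟨hxl, hlex⟩)
    omega
  rcases trichotomous_of (List.Lex (· < ·)) (U ++ Y) (Y ++ V) with h | h | h
  · exfalso
    apply hmin _ h1 hlen1
    have h' : List.Lex (· < ·) ((U ++ Y) ++ Z) ((Y ++ V) ++ Z) :=
      lex_append_of_length_eq h (by simp only [List.length_append]; omega) Z Z
    have h'' := lex_append_left (X ++ U) h'
    simpa [List.append_assoc] using h''
  · exact h
  · exfalso
    apply hmin _ h2 hlen2
    have h' : List.Lex (· < ·) ((Y ++ V) ++ (V ++ Z)) ((U ++ Y) ++ (V ++ Z)) :=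
      lex_append_of_length_eq h (by simp only [List.length_append]; omega) _ _
    have h'' := lex_append_left X h'
    simpa [List.append_assoc] using h''

end Stmt9Aux

theorem stmt9 {α σ : Type*} [LinearOrder α] [Fintype σ] (M : DFA α σ)
    (w : List α) (hw : w ∈ SWords M.accepts)
    (k : ℕ) (u v : ℕ → List α) (i : ℕ → ℕ)
    (hexp : ∀ j < k, 1 ≤ i j)
    (hfact : w = (List.range k).flatMap (fun j => u j ++ wpow (v j) (i j)))
    (hloop : ∀ j < k,
      M.evalFrom M.start
          ((List.range j).flatMap (fun t => u t ++ wpow (v t) (i t)) ++ u j) =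
        M.evalFrom M.start
          ((List.range j).flatMap (fun t => u t ++ wpow (v t) (i t)) ++ u j ++ v j))
    (hpre : ∀ j < k, v j ≠ [] →
      ¬ (v j <+: (List.range' (j + 1) (k - (j + 1))).flatMap
            (fun t => u t ++ wpow (v t) (i t)))) :
    ∀ a b, a < b → b < k → v a ≠ [] → v b ≠ [] →
      (v a).length ≠ (v b).length := by
  intro a b hab hbk hva hvb hlen
  have hak : a < k := hab.trans hbk
  have hia : 1 ≤ i a := hexp a hak
  have hib : 1 ≤ i b := hexp b hbk
  obtain ⟨P, hP⟩ : ∃ x, x =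
      (List.range a).flatMap (fun t => u t ++ wpow (v t) (i t)) ++ u a := ⟨_, rfl⟩
  obtain ⟨mid, hmid⟩ : ∃ x, x =
      (List.range' (a + 1) (b - (a + 1))).flatMap (fun t => u t ++ wpow (v t) (i t)) := ⟨_, rfl⟩
  obtain ⟨post, hpost⟩ : ∃ x, x =
      (List.range' (b + 1) (k - (b + 1))).flatMap (fun t => u t ++ wpow (v t) (i t)) := ⟨_, rfl⟩
  obtain ⟨Q, hQ⟩ : ∃ x, x = mid ++ u b := ⟨_, rfl⟩
  -- decomposition of the prefix up to b
  have hpreB : (List.range b).flatMap (fun t => u t ++ wpow (v t) (i t))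
      = P ++ (wpow (v a) (i a) ++ mid) := by
    rw [Stmt9Aux.range_split hab, hP, hmid]
    simp [List.append_assoc]
  -- decomposition of w
  have hwdec : w = P ++ (wpow (v a) (i a) ++ (Q ++ (wpow (v b) (i b) ++ post))) := by
    rw [hfact, Stmt9Aux.range_split hbk, List.flatMap_append, List.flatMap_cons,
      hpreB, hQ, hmid, hpost]
    simp [List.append_assoc]
  -- decomposition of the suffix after position a
  have hsuffA : (List.range' (a + 1) (k - (a + 1))).flatMap (fun t => u t ++ wpow (v t) (i t))
      = Q ++ (wpow (v b) (i b) ++ post) := by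
    rw [Stmt9Aux.range'_split (by omega : a + 1 ≤ b) (by omega : b < a + 1 + (k - (a + 1))),
      show a + 1 + (k - (a + 1)) - (b + 1) = k - (b + 1) by omega, hQ, hmid, hpost]
    simp [List.append_assoc]
  -- loop at a
  have ha1 : M.evalFrom (M.evalFrom M.start P) (v a) = M.evalFrom M.start P := by
    have h := hloop a hak
    rw [← hP] at h
    rw [DFA.evalFrom_of_append] at h
    exact h.symm
  -- loop at b
  have hb1 : M.evalFrom (M.evalFrom (M.evalFrom M.start P) Q) (v b)
      = M.evalFrom (M.evalFrom M.start P) Q := by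
    have h := hloop b hbk
    rw [hpreB,
      show (P ++ (wpow (v a) (i a) ++ mid)) ++ u b = P ++ (wpow (v a) (i a) ++ Q) by
        rw [hQ]; simp [List.append_assoc],
      show (P ++ (wpow (v a) (i a) ++ Q)) ++ v b
          = P ++ (wpow (v a) (i a) ++ (Q ++ v b)) by
        simp [List.append_assoc]] at h
    rw [Stmt9Aux.evalFrom_pump1 M (v a) Q ha1, Stmt9Aux.evalFrom_pump1 M (v a) (Q ++ v b) ha1,
      DFA.evalFrom_of_append] at h
    exact h.symm
  -- pumping: all double-pumped words are accepted
  have hacc : ∀ m1 m2 : ℕ,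
      P ++ (wpow (v a) m1 ++ (Q ++ (wpow (v b) m2 ++ post))) ∈ M.accepts := by
    have hval : ∀ m1 m2 : ℕ,
        M.evalFrom M.start (P ++ (wpow (v a) m1 ++ (Q ++ (wpow (v b) m2 ++ post))))
          = M.evalFrom (M.evalFrom (M.evalFrom M.start P) Q) post := by
      intro m1 m2
      rw [Stmt9Aux.evalFrom_pump1 M (v a) _ ha1, DFA.evalFrom_of_append,
        DFA.evalFrom_of_append, Stmt9Aux.evalFrom_wpow M _ (v b) hb1]
    intro m1 m2
    have hw1 : M.evalFrom M.start w ∈ M.accept := by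
      have := hw.1
      exact (DFA.mem_accepts M).1 this
    rw [hwdec, hval (i a) (i b)] at hw1
    rw [DFA.mem_accepts]
    show M.evalFrom M.start _ ∈ M.accept
    rw [hval m1 m2]
    exact hw1
  -- naming the pieces of the three relevant words
  obtain ⟨X, hX⟩ : ∃ x, x = P ++ wpow (v a) (i a - 1) := ⟨_, rfl⟩
  obtain ⟨Y, hY⟩ : ∃ x, x = mid ++ (u b ++ wpow (v b) (i b - 1)) := ⟨_, rfl⟩
  have hsa : wpow (v a) (i a) = wpow (v a) (i a - 1) ++ v a := by
    rw [← Stmt9Aux.wpow_succ']; congr 1; omega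
  have hsb : wpow (v b) (i b) = wpow (v b) (i b - 1) ++ v b := by
    rw [← Stmt9Aux.wpow_succ']; congr 1; omega
  have hsa2 : wpow (v a) (i a + 1) = wpow (v a) (i a - 1) ++ (v a ++ v a) := by
    rw [show i a + 1 = (i a - 1) + 2 by omega, Stmt9Aux.wpow_add]
    simp [wpow]
  have hsb2 : wpow (v b) (i b + 1) = wpow (v b) (i b - 1) ++ (v b ++ v b) := by
    rw [show i b + 1 = (i b - 1) + 2 by omega, Stmt9Aux.wpow_add]
    simp [wpow]
  have hwX : w = X ++ (v a ++ (Y ++ (v b ++ post))) := by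
    rw [hwdec, hX, hY, hQ, hsa, hsb]; simp [List.append_assoc]
  have hw1X : P ++ (wpow (v a) (i a + 1) ++ (Q ++ (wpow (v b) (i b - 1) ++ post)))
      = X ++ (v a ++ (v a ++ (Y ++ post))) := by
    rw [hX, hY, hQ, hsa2]; simp [List.append_assoc]
  have hw2X : P ++ (wpow (v a) (i a - 1) ++ (Q ++ (wpow (v b) (i b + 1) ++ post)))
      = X ++ (Y ++ (v b ++ (v b ++ post))) := by
    rw [hX, hY, hQ, hsb2]; simp [List.append_assoc]
  -- the combinatorial core
  have hcore : v a ++ Y = Y ++ v b := by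
    refine Stmt9Aux.core (L := M.accepts) (X := X) (Z := post) ?_ ?_ ?_ hlen
    · rw [← hwX]; exact hw
    · rw [← hw1X]; exact hacc (i a + 1) (i b - 1)
    · rw [← hw2X]; exact hacc (i a - 1) (i b + 1)
  -- v a is then a prefix of the suffix after a : contradiction
  apply hpre a hak hva
  rw [hsuffA,
    show Q ++ (wpow (v b) (i b) ++ post) = (Y ++ v b) ++ post by
      rw [hY, hQ, hsb]; simp [List.append_assoc],
    ← hcore, List.append_assoc]
  exact List.prefix_append _ _
end

section
/- Let L ⊆ Σ* be a thin regular language recognized by a DFA with n states. Then the language L_≤ = {v : ∃ u ∈ L, |u| = |v|, v ≤ u} is recognized by an unambiguous NFA with 2n states. Concretely: given a DFA (Q, Σ, ·, q₀, F) for L, the NFA with states Q × {0,1}, initial state (q₀,0), final states F × {0,1}, and transitions (q,0) →a (q·a, 0), (q,0) →a (q·b, 1) for a < b, and (q,1) →a (q·b, 1) for all b, recognizes L_≤ and has at most one accepting run on every input. -/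
/-- The language of words that are at most some word of `L` of the same length. -/
def Lle {α : Type*} [LinearOrder α] (L : Set (List α)) : Set (List α) :=
  {v | ∃ u ∈ L, u.length = v.length ∧ (v = u ∨ List.Lex (· < ·) v u)}

/-- The NFA from the paper recognizing `Lle L`: the second component records whether we
have already output a strictly larger letter. -/
def succNFA {α σ : Type*} [LinearOrder α] (M : DFA α σ) : NFA α (σ × Bool) where
  step := fun p a =>
    if p.2 then {q | ∃ b : α, q = (M.step p.1 b, true)}
    else {(M.step p.1 a, false)} ∪ {q | ∃ b : α, a < b ∧ q = (M.step p.1 b, true)}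
  start := {(M.start, false)}
  accept := {q | q.1 ∈ M.accept}

/-- A run of an NFA on a word `w`, as a sequence of `w.length + 1` states. -/
def IsAcceptingRun {α σ : Type*} (N : NFA α σ) (w : List α)
    (r : Fin (w.length + 1) → σ) : Prop :=
  r 0 ∈ N.start ∧ r (Fin.last w.length) ∈ N.accept ∧
  ∀ j : Fin w.length, r j.succ ∈ N.step (r j.castSucc) (w.get j)

section Aux

variable {α σ : Type*} [LinearOrder α]

private lemma lex_cons_iff' {a c : α} {w u : List α} :
    List.Lex (· < ·) (a :: w) (c :: u) ↔ a < c ∨ (a = c ∧ List.Lex (· < ·) w u) := by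
  constructor
  · intro h
    cases h with
    | rel h => exact Or.inl h
    | cons h => exact Or.inr ⟨rfl, h⟩
  · rintro (h | ⟨rfl, h⟩)
    · exact List.Lex.rel h
    · exact List.Lex.cons h

private lemma dfa_evalFrom_cons (M : DFA α σ) (q : σ) (a : α) (u : List α) :
    M.evalFrom q (a :: u) = M.evalFrom (M.step q a) u := rfl

private lemma nfa_stepSet_singleton {τ : Type*} (N : NFA α τ) (s : τ) (a : α) :
    N.stepSet {s} a = N.step s a := by
  simp [NFA.stepSet]

private lemma nfa_evalFrom_cons {τ : Type*} (N : NFA α τ) (S : Set τ) (a : α) (w : List α) :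
    N.evalFrom S (a :: w) = N.evalFrom (N.stepSet S a) w := rfl

private lemma mem_evalFrom_split {τ : Type*} (N : NFA α τ) :
    ∀ (w : List α) (S : Set τ) (x : τ),
      x ∈ N.evalFrom S w ↔ ∃ s ∈ S, x ∈ N.evalFrom {s} w := by
  intro w
  induction w with
  | nil => intro S x; simp [NFA.evalFrom]
  | cons a w ih =>
    intro S x
    rw [nfa_evalFrom_cons, ih]
    constructor
    · rintro ⟨t, ht, hx⟩
      rw [N.mem_stepSet] at ht
      obtain ⟨s, hs, hts⟩ := ht
      refine ⟨s, hs, ?_⟩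
      rw [nfa_evalFrom_cons, ih]
      exact ⟨t, by rwa [nfa_stepSet_singleton], hx⟩
    · rintro ⟨s, hs, hx⟩
      rw [nfa_evalFrom_cons, ih] at hx
      obtain ⟨t, ht, hx⟩ := hx
      rw [nfa_stepSet_singleton] at ht
      refine ⟨t, ?_, hx⟩
      rw [N.mem_stepSet]
      exact ⟨s, hs, ht⟩

private lemma step_true (M : DFA α σ) (q : σ) (a : α) :
    (succNFA M).step (q, true) a = {x | ∃ b : α, x = (M.step q b, true)} := by
  simp [succNFA]

private lemma step_false (M : DFA α σ) (q : σ) (a : α) :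
    (succNFA M).step (q, false) a =
      {(M.step q a, false)} ∪ {x | ∃ b : α, a < b ∧ x = (M.step q b, true)} := by
  simp [succNFA]

private lemma evalFrom_true (M : DFA α σ) :
    ∀ (w : List α) (q : σ) (p : σ × Bool),
      p ∈ (succNFA M).evalFrom {(q, true)} w ↔
        ∃ u : List α, u.length = w.length ∧ p = (M.evalFrom q u, true) := by
  intro w
  induction w with
  | nil =>
    intro q p
    constructor
    · intro h
      exact ⟨[], rfl, by simpa using h⟩
    · rintro ⟨u, hu, rfl⟩
      rw [List.length_nil, List.length_eq_zero_iff] at hu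
      subst hu
      rfl
  | cons a w ih =>
    intro q p
    rw [nfa_evalFrom_cons, mem_evalFrom_split]
    constructor
    · rintro ⟨t, ht, hp⟩
      rw [nfa_stepSet_singleton, step_true] at ht
      obtain ⟨b, rfl⟩ := ht
      rw [ih] at hp
      obtain ⟨u, hu, rfl⟩ := hp
      exact ⟨b :: u, by simp [hu], rfl⟩
    · rintro ⟨u, hu, rfl⟩
      cases u with
      | nil => simp at hu
      | cons b u =>
        refine ⟨(M.step q b, true), ?_, ?_⟩
        · rw [nfa_stepSet_singleton, step_true]
          exact ⟨b, rfl⟩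
        · rw [ih]
          exact ⟨u, by simpa using hu, rfl⟩

private lemma evalFrom_false (M : DFA α σ) :
    ∀ (w : List α) (q : σ) (p : σ × Bool),
      p ∈ (succNFA M).evalFrom {(q, false)} w ↔
        (p = (M.evalFrom q w, false) ∨
          ∃ u : List α, u.length = w.length ∧ List.Lex (· < ·) w u ∧
            p = (M.evalFrom q u, true)) := by
  intro w
  induction w with
  | nil =>
    intro q p
    constructor
    · intro h
      exact Or.inl (by simpa using h)
    · rintro (rfl | ⟨u, hu, hlex, rfl⟩)
      · rfl
      · rw [List.length_nil, List.length_eq_zero_iff] at hu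
        subst hu
        cases hlex
  | cons a w ih =>
    intro q p
    rw [nfa_evalFrom_cons, mem_evalFrom_split]
    constructor
    · rintro ⟨t, ht, hp⟩
      rw [nfa_stepSet_singleton, step_false] at ht
      rcases ht with ht | ⟨b, hab, rfl⟩
      · rw [Set.mem_singleton_iff] at ht
        subst ht
        rw [ih] at hp
        rcases hp with rfl | ⟨u, hu, hlex, rfl⟩
        · exact Or.inl rfl
        · exact Or.inr ⟨a :: u, by simp [hu], List.Lex.cons hlex, rfl⟩
      · rw [evalFrom_true] at hp
        obtain ⟨u, hu, rfl⟩ := hp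
        exact Or.inr ⟨b :: u, by simp [hu], List.Lex.rel hab, rfl⟩
    · rintro (rfl | ⟨u, hu, hlex, rfl⟩)
      · refine ⟨(M.step q a, false), ?_, ?_⟩
        · rw [nfa_stepSet_singleton, step_false]
          exact Or.inl rfl
        · rw [ih]
          exact Or.inl rfl
      · cases u with
        | nil => simp at hu
        | cons c u =>
          rw [lex_cons_iff'] at hlex
          rcases hlex with hac | ⟨rfl, hlex⟩
          · refine ⟨(M.step q c, true), ?_, ?_⟩
            · rw [nfa_stepSet_singleton, step_false]
              exact Or.inr ⟨c, hac, rfl⟩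
            · rw [evalFrom_true]
              exact ⟨u, by simpa using hu, rfl⟩
          · refine ⟨(M.step q a, false), ?_, ?_⟩
            · rw [nfa_stepSet_singleton, step_false]
              exact Or.inl rfl
            · rw [ih]
              exact Or.inr ⟨u, by simpa using hu, hlex, rfl⟩

private lemma aux_true (M : DFA α σ) :
    ∀ (w : List α) (q : σ) (s : ℕ → σ × Bool),
      s 0 = (q, true) →
      (∀ i (h : i < w.length), s (i + 1) ∈ (succNFA M).step (s i) (w.get ⟨i, h⟩)) →
      ∃ u : List α, u.length = w.length ∧
        ∀ i ≤ w.length, s i = (M.evalFrom q (u.take i), true) := by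
  intro w
  induction w with
  | nil =>
    intro q s h0 _
    refine ⟨[], rfl, ?_⟩
    intro i hi
    have hi0 : i = 0 := by simpa using hi
    subst hi0
    simpa using h0
  | cons a w ih =>
    intro q s h0 hstep
    have h1 := hstep 0 (by simp)
    rw [h0, step_true] at h1
    obtain ⟨b, hb⟩ := h1
    obtain ⟨u, hlen, hpt⟩ := ih (M.step q b) (fun i => s (i + 1)) hb
      (fun i h => hstep (i + 1) (by simpa using Nat.succ_lt_succ h))
    refine ⟨b :: u, by simp [hlen], ?_⟩
    intro i hi
    cases i with
    | zero => simpa using h0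
    | succ i =>
      rw [List.take_succ_cons, dfa_evalFrom_cons]
      exact hpt i (by simp only [List.length_cons] at hi; omega)

private lemma aux_false (M : DFA α σ) :
    ∀ (w : List α) (q : σ) (s : ℕ → σ × Bool),
      s 0 = (q, false) →
      (∀ i (h : i < w.length), s (i + 1) ∈ (succNFA M).step (s i) (w.get ⟨i, h⟩)) →
      ∃ u : List α, u.length = w.length ∧ (u = w ∨ List.Lex (· < ·) w u) ∧
        ∀ i ≤ w.length,
          s i = (M.evalFrom q (u.take i), decide (u.take i ≠ w.take i)) := by
  intro w
  induction w with
  | nil =>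
    intro q s h0 _
    refine ⟨[], rfl, Or.inl rfl, ?_⟩
    intro i hi
    have hi0 : i = 0 := by simpa using hi
    subst hi0
    simpa using h0
  | cons a w ih =>
    intro q s h0 hstep
    have h1 := hstep 0 (by simp)
    rw [h0, step_false] at h1
    rcases h1 with h1 | ⟨b, hab, hb⟩
    · rw [Set.mem_singleton_iff] at h1
      obtain ⟨u, hlen, hor, hpt⟩ := ih (M.step q a) (fun i => s (i + 1)) h1
        (fun i h => hstep (i + 1) (by simpa using Nat.succ_lt_succ h))
      refine ⟨a :: u, by simp [hlen], ?_, ?_⟩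
      · rcases hor with rfl | hlex
        · exact Or.inl rfl
        · exact Or.inr (List.Lex.cons hlex)
      · intro i hi
        cases i with
        | zero => simpa using h0
        | succ i =>
          rw [List.take_succ_cons, List.take_succ_cons, dfa_evalFrom_cons]
          have hd : decide (a :: u.take i ≠ a :: w.take i)
              = decide (u.take i ≠ w.take i) := decide_eq_decide.mpr (by simp)
          rw [hd]
          exact hpt i (by simp only [List.length_cons] at hi; omega)
    · obtain ⟨u, hlen, hpt⟩ := aux_true M w (M.step q b) (fun i => s (i + 1)) hb
        (fun i h => hstep (i + 1) (by simpa using Nat.succ_lt_succ h))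
      refine ⟨b :: u, by simp [hlen], Or.inr (List.Lex.rel hab), ?_⟩
      intro i hi
      cases i with
      | zero => simpa using h0
      | succ i =>
        rw [List.take_succ_cons, List.take_succ_cons, dfa_evalFrom_cons]
        have hne : (b :: u.take i) ≠ (a :: w.take i) := by
          intro h
          have : b = a := by injection h
          exact absurd hab (by simp [this])
        rw [decide_eq_true hne]
        exact hpt i (by simp only [List.length_cons] at hi; omega)

end Aux

theorem stmt12 {α σ : Type*} [LinearOrder α] [Fintype σ] (M : DFA α σ)
    (hthin : Thin M.accepts) :
    (∀ w : List α, w ∈ (succNFA M).accepts ↔ w ∈ Lle M.accepts) ∧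
    (∀ (w : List α) (r₁ r₂ : Fin (w.length + 1) → σ × Bool),
      IsAcceptingRun (succNFA M) w r₁ → IsAcceptingRun (succNFA M) w r₂ → r₁ = r₂) ∧
    Fintype.card (σ × Bool) = 2 * Fintype.card σ := by
  refine ⟨?_, ?_, by simp [Fintype.card_prod, Nat.mul_comm]⟩
  · -- language equivalence
    intro w
    rw [NFA.mem_accepts]
    have hstart : (succNFA M).start = {(M.start, false)} := rfl
    constructor
    · rintro ⟨p, hacc, hp⟩
      rw [hstart, evalFrom_false] at hp
      rcases hp with rfl | ⟨u, hu, hlex, rfl⟩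
      · exact ⟨w, hacc, rfl, Or.inl rfl⟩
      · exact ⟨u, hacc, hu, Or.inr hlex⟩
    · rintro ⟨u, huL, hlen, hor⟩
      rcases hor with rfl | hlex
      · refine ⟨(M.evalFrom M.start w, false), huL, ?_⟩
        rw [hstart, evalFrom_false]
        exact Or.inl rfl
      · refine ⟨(M.evalFrom M.start u, true), huL, ?_⟩
        rw [hstart, evalFrom_false]
        exact Or.inr ⟨u, hlen, hlex, rfl⟩
  · -- unambiguity
    intro w r₁ r₂ h₁ h₂
    have run_word : ∀ r : Fin (w.length + 1) → σ × Bool, IsAcceptingRun (succNFA M) w r →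
        ∃ u : List α, u.length = w.length ∧ u ∈ M.accepts ∧
          ∀ i : ℕ, ∀ hi : i ≤ w.length,
            r ⟨i, by omega⟩ = (M.evalFrom M.start (u.take i), decide (u.take i ≠ w.take i)) := by
      intro r hr
      obtain ⟨hr0, hracc, hrstep⟩ := hr
      set s : ℕ → σ × Bool := fun i => r ⟨min i w.length, by omega⟩ with hs
      have hmk : ∀ i (hi : i ≤ w.length), s i = r ⟨i, by omega⟩ := by
        intro i hi
        simp only [hs]
        congr 1
        exact Fin.ext (by simpa using Nat.min_eq_left hi)
      have h0 : s 0 = (M.start, false) := by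
        rw [hmk 0 (by omega)]
        exact hr0
      have hstep : ∀ i (h : i < w.length),
          s (i + 1) ∈ (succNFA M).step (s i) (w.get ⟨i, h⟩) := by
        intro i h
        rw [hmk (i + 1) (by omega), hmk i (by omega)]
        exact hrstep ⟨i, h⟩
      obtain ⟨u, hlen, _, hpt⟩ := aux_false M w M.start s h0 hstep
      have htake : u.take w.length = u := by rw [← hlen, List.take_length]
      refine ⟨u, hlen, ?_, ?_⟩
      · have hpl := hpt w.length le_rfl
        rw [hmk w.length le_rfl] at hpl
        have hlast : r ⟨w.length, by omega⟩ = r (Fin.last w.length) := rfl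
        rw [hlast] at hpl
        rw [DFA.mem_accepts]
        show M.evalFrom M.start u ∈ M.accept
        have h1 : (r (Fin.last w.length)).1 = M.evalFrom M.start u := by rw [hpl, htake]
        rw [← h1]
        exact hracc
      · intro i hi
        rw [← hmk i hi]
        exact hpt i hi
    obtain ⟨u₁, hl₁, hu₁, hpt₁⟩ := run_word r₁ h₁
    obtain ⟨u₂, hl₂, hu₂, hpt₂⟩ := run_word r₂ h₂
    have hequ : u₁ = u₂ := hthin w.length u₁ hu₁ u₂ hu₂ hl₁ hl₂
    funext j
    have hj : (j : ℕ) ≤ w.length := by omega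
    have e₁ := hpt₁ j hj
    have e₂ := hpt₂ j hj
    have hjj : (⟨(j : ℕ), by omega⟩ : Fin (w.length + 1)) = j := Fin.ext rfl
    rw [hjj] at e₁ e₂
    rw [e₁, e₂, hequ]
end

section
/- Let v be the K-successor of u where K is recognized by a DFA with n states. Then |u| ≤ |v| ≤ |u| + n. -/
/-- `v` is the `L`-successor of `u`: the least word of `L` strictly greater than `u`. -/
def IsSucc {α : Type*} [LinearOrder α] (L : Set (List α)) (u v : List α) : Prop :=
  v ∈ L ∧ RadixLT u v ∧ ∀ w ∈ L, RadixLT u w → ¬ RadixLT w v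

theorem stmt14 {α σ : Type*} [LinearOrder α] [Fintype σ] (M : DFA α σ)
    (u v : List α) (h : IsSucc M.accepts u v) :
    u.length ≤ v.length ∧ v.length ≤ u.length + Fintype.card σ := by
  obtain ⟨hv, huv, hmin⟩ := h
  have h1 : u.length ≤ v.length := by
    rcases huv with hl | ⟨hl, _⟩
    · exact hl.le
    · exact hl.le
  refine ⟨h1, ?_⟩
  by_contra hgt
  push_neg at hgt
  have hlen : Fintype.card σ ≤ v.length := by omega
  obtain ⟨a, b, c, hs, hab, hbne, hsub⟩ := M.pumping_lemma hv hlen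
  have hw : a ++ c ∈ M.accepts := by
    apply hsub
    refine ⟨a ++ [], ⟨a, rfl, [], ?_, rfl⟩, c, rfl, by simp⟩
    exact Language.nil_mem_kstar _
  have hblen : 0 < b.length := List.length_pos_iff.mpr hbne
  have hvlen : v.length = a.length + b.length + c.length := by
    rw [hs]; simp [List.length_append]; omega
  have hwu : u.length < (a ++ c).length := by
    simp only [List.length_append]; omega
  exact hmin _ hw (Or.inl hwu) (Or.inl (by simp only [List.length_append]; omega))
end

section
/- Let p₁ < p₂ < ⋯ < p_k be the first k primes, p = p₁⋯p_k, and let L = 1* ∪ ⋃_{1≤i≤k} 1^i 0^{k-i+1} {1, 1², …, 1^{p_i - 1}} (1^{p_i})* over the ordered binary alphabet {0 < 1}. Then the word 1^{k+1+p} belongs to S(L). -/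
/-- The prime-based language over the binary alphabet `{0 < 1}` (with `false = 0`,
`true = 1`): `1* ∪ ⋃_{1 ≤ i ≤ k} 1^i 0^(k-i+1) {1, …, 1^(pᵢ-1)} (1^(pᵢ))*`, where
`pᵢ` is the `i`-th prime. -/
def primeLang (k : ℕ) : Set (List Bool) :=
  {w | ∃ m : ℕ, w = List.replicate m true} ∪
  {w | ∃ i, 1 ≤ i ∧ i ≤ k ∧ ∃ j, 1 ≤ j ∧ ¬ (Nat.nth Nat.Prime (i - 1) ∣ j) ∧
    w = List.replicate i true ++ List.replicate (k - i + 1) false ++ List.replicate j true}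

theorem stmt15 (k : ℕ) :
    List.replicate (k + 1 + ∏ i ∈ Finset.range k, Nat.nth Nat.Prime i) true ∈
      SWords (primeLang k) := by
  set p := ∏ i ∈ Finset.range k, Nat.nth Nat.Prime i with hp
  constructor
  · exact Or.inl ⟨k + 1 + p, rfl⟩
  · intro v hv hlt
    rcases hlt with h | ⟨heq, hlex⟩
    · simpa using h
    rcases hv with ⟨m, rfl⟩ | ⟨i, hi1, hik, j, hj1, hjd, rfl⟩
    · exfalso
      have : m = k + 1 + p := by simpa using heq
      subst this
      exact irrefl_of (List.Lex (· < ·)) _ hlex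
    · exfalso
      apply hjd
      have hlen : i + ((k - i + 1) + j) = k + 1 + p := by
        simpa [List.length_append, List.length_replicate, add_assoc] using heq
      have hik' : i + (k - i) = k := Nat.add_sub_cancel' hik
      have hj : j = p := by omega
      subst hj
      exact Finset.dvd_prod_of_mem _ (Finset.mem_range.mpr (by omega))
end

section
/- Let p₁, …, p_k be distinct primes, p = p₁⋯p_k, and L as in the prime-based construction: L = 1* ∪ ⋃_i 1^i 0^{k-i+1} {1,…,1^{p_i-1}}(1^{p_i})*. For every ℓ with 1 ≤ ℓ < p, the word 1^{k+1+p+ℓ} does NOT belong to S(L): there exists i with p_i ∤ ℓ, hence p_i ∤ p + ℓ, and then 1^i 0^{k-i+1} 1^{p+ℓ} is a word of L of the same length k+1+p+ℓ which is strictly smaller than 1^{k+1+p+ℓ} in radix order. -/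
lemma lexAppend {l s t : List Bool} (h : List.Lex (· < ·) s t) :
    List.Lex (· < ·) (l ++ s) (l ++ t) := by
  induction l with
  | nil => simpa
  | cons a l ih => exact List.Lex.cons ih

theorem stmt16 (k ℓ : ℕ) (hℓ : 1 ≤ ℓ)
    (hℓ' : ℓ < ∏ i ∈ Finset.range k, Nat.nth Nat.Prime i) :
    List.replicate (k + 1 + (∏ i ∈ Finset.range k, Nat.nth Nat.Prime i) + ℓ) true ∉
      SWords (primeLang k) ∧
    ∃ i, 1 ≤ i ∧ i ≤ k ∧ ¬ (Nat.nth Nat.Prime (i - 1) ∣ ℓ) ∧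
      ¬ (Nat.nth Nat.Prime (i - 1) ∣ (∏ i ∈ Finset.range k, Nat.nth Nat.Prime i) + ℓ) ∧
      (List.replicate i true ++ List.replicate (k - i + 1) false ++
          List.replicate ((∏ i ∈ Finset.range k, Nat.nth Nat.Prime i) + ℓ) true) ∈
        primeLang k ∧
      RadixLT
        (List.replicate i true ++ List.replicate (k - i + 1) false ++
          List.replicate ((∏ i ∈ Finset.range k, Nat.nth Nat.Prime i) + ℓ) true)
        (List.replicate (k + 1 + (∏ i ∈ Finset.range k, Nat.nth Nat.Prime i) + ℓ) true) := by

  set P := ∏ i ∈ Finset.range k, Nat.nth Nat.Prime i with hP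
  have hex : ∃ i0, i0 < k ∧ ¬ Nat.nth Nat.Prime i0 ∣ ℓ := by
    by_contra h
    push_neg at h
    have hinj : ∀ a ∈ Finset.range k, ∀ b ∈ Finset.range k,
        Nat.nth Nat.Prime a = Nat.nth Nat.Prime b → a = b :=
      fun a _ b _ he => Nat.nth_injective Nat.infinite_setOf_prime he
    have hdvd : P ∣ ℓ := by
      have he : ∏ p ∈ (Finset.range k).image (Nat.nth Nat.Prime), p = P :=
        (Finset.prod_image hinj).trans hP.symm
      rw [← he]
      apply Finset.prod_primes_dvd
      · intro p hp
        obtain ⟨a, -, rfl⟩ := Finset.mem_image.1 hp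
        exact (Nat.prime_nth_prime a).prime
      · intro p hp
        obtain ⟨a, ha, rfl⟩ := Finset.mem_image.1 hp
        exact h a (Finset.mem_range.1 ha)
    exact absurd (Nat.le_of_dvd hℓ hdvd) (not_le.2 hℓ')
  obtain ⟨i0, hi0k, hi0⟩ := hex
  have hpdvdP : Nat.nth Nat.Prime i0 ∣ P :=
    Finset.dvd_prod_of_mem _ (Finset.mem_range.2 hi0k)
  have hndvd : ¬ Nat.nth Nat.Prime i0 ∣ P + ℓ :=
    fun h => hi0 ((Nat.dvd_add_right hpdvdP).1 h)
  set i := i0 + 1 with hi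
  have hi1 : i - 1 = i0 := by omega
  have hik : 1 ≤ i ∧ i ≤ k := by omega
  have hmem : (List.replicate i true ++ List.replicate (k - i + 1) false ++
      List.replicate (P + ℓ) true) ∈ primeLang k := by
    right
    exact ⟨i, hik.1, hik.2, P + ℓ, by omega, by rw [hi1]; exact hndvd, rfl⟩
  have hlen : (List.replicate i true ++ List.replicate (k - i + 1) false ++
      List.replicate (P + ℓ) true).length =
      (List.replicate (k + 1 + P + ℓ) true).length := by
    simp [List.length_append, List.length_replicate]
    omega
  have hlex : List.Lex (· < ·)
      (List.replicate i true ++ List.replicate (k - i + 1) false ++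
        List.replicate (P + ℓ) true)
      (List.replicate (k + 1 + P + ℓ) true) := by
    have h1 : List.replicate (k + 1 + P + ℓ) true =
        List.replicate i true ++ List.replicate (k + 1 + P + ℓ - i) true := by
      rw [← List.replicate_add]
      congr 1
      omega
    rw [h1, List.append_assoc]
    apply lexAppend
    have h2 : List.replicate (k - i + 1) false = false :: List.replicate (k - i) false := by
      rw [List.replicate_succ]
    have h3 : List.replicate (k + 1 + P + ℓ - i) true =
        true :: List.replicate (k + 1 + P + ℓ - i - 1) true := by
      have : k + 1 + P + ℓ - i = (k + 1 + P + ℓ - i - 1) + 1 := by omega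
      rw [this, List.replicate_succ, Nat.add_sub_cancel]
    rw [h2, h3]
    exact List.Lex.rel (by decide)
  have hradix : RadixLT
      (List.replicate i true ++ List.replicate (k - i + 1) false ++
        List.replicate (P + ℓ) true)
      (List.replicate (k + 1 + P + ℓ) true) := Or.inr ⟨hlen, hlex⟩
  constructor
  · rintro ⟨-, hmin⟩
    have := hmin _ hmem hradix
    omega
  · exact ⟨i, hik.1, hik.2, by rw [hi1]; exact hi0, by rw [hi1]; exact hndvd, hmem, hradix⟩
end
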